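/- Let T be a tree Mealy machine with finite output alphabet O and let U ⊆ Q^T be a finite set of states. If there exist r, r' ∈ U with r # r', then the expected reward satisfies E(U) > 0. -/

import Mathlib

open scoped Classical

/-- A Mealy machine over input alphabet `I` and output alphabet `O`, with state
type `Q`, initial state `q0`, and a partial combined output/transition map
`trans : Q × I ⇀ O × Q` (so the output and transition functions are defined on
exactly the same pairs). -/
structure Mealy (Q I O : Type) where
  q0 : Q
  trans : Q → I → Option (O × Q)

namespace Mealy

variable {Q Q' I O : Type}

/-- Extension of the combined output/transition map to input words. -/
def stepStar (M : Mealy Q I O) : Q → List I → Option (List O × Q)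
  | q, [] => some ([], q)
  | q, i :: σ => (M.trans q i).bind fun p =>
      (stepStar M p.2 σ).map fun r => (p.1 :: r.1, r.2)

/-- `λ(q, σ)`: the output word produced from `q` on input word `σ` (if defined);
this is also the semantics `⟦q⟧ : I* ⇀ O*` of the state `q`. -/
def outStar (M : Mealy Q I O) (q : Q) (σ : List I) : Option (List O) :=
  (M.stepStar q σ).map Prod.fst

/-- `δ(q, σ)`: the state reached from `q` on input word `σ` (if defined). -/
def delStar (M : Mealy Q I O) (q : Q) (σ : List I) : Option Q :=
  (M.stepStar q σ).map Prod.snd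

/-- `σ ⊢ q # p`: the word `σ` witnesses apartness of `q` and `p`. -/
def ApartW (M : Mealy Q I O) (σ : List I) (q p : Q) : Prop :=
  (M.outStar q σ).isSome ∧ (M.outStar p σ).isSome ∧ M.outStar q σ ≠ M.outStar p σ

/-- `q # p`: states `q` and `p` are apart. -/
def Apart (M : Mealy Q I O) (q p : Q) : Prop := ∃ σ, M.ApartW σ q p

/-- `q ≈ r`: states `q` (of `M`) and `r` (of `N`) are equivalent, i.e. have equal
semantics `⟦q⟧ = ⟦r⟧` as partial maps `I* ⇀ O*`. -/
def StateEquiv (M : Mealy Q I O) (N : Mealy Q' I O) (q : Q) (r : Q') : Prop :=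
  ∀ σ, M.outStar q σ = N.outStar r σ

/-- A functional simulation `f : M → N`. -/
def FunSim (M : Mealy Q I O) (N : Mealy Q' I O) (f : Q → Q') : Prop :=
  f M.q0 = N.q0 ∧
    ∀ q i o q'', M.trans q i = some (o, q'') → N.trans (f q) i = some (o, f q'')

/-- A Mealy machine is complete if its transition map is total. -/
def Complete (M : Mealy Q I O) : Prop := ∀ q i, (M.trans q i).isSome

/-- A Mealy machine is a tree if every state is reached from the root by a
unique input word (its access sequence). -/
def IsTree (M : Mealy Q I O) : Prop :=
  ∀ q : Q, ∃! σ : List I, M.delStar M.q0 σ = some q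

/-- `S` is a basis of the observation tree `T`: a subtree containing the root
whose states are pairwise apart. -/
structure IsBasis (T : Mealy Q I O) (S : Set Q) : Prop where
  root_mem : T.q0 ∈ S
  subtree_closed : ∀ q i o q', T.trans q i = some (o, q') → q' ∈ S → q ∈ S
  pairwise_apart : ∀ p ∈ S, ∀ q ∈ S, p ≠ q → T.Apart p q

/-- The frontier `F`: immediate non-basis successors of basis states. -/
def frontier (T : Mealy Q I O) (S : Set Q) : Set Q :=
  {q' | q' ∉ S ∧ ∃ q ∈ S, ∃ i o, T.trans q i = some (o, q')}

/-- The basis `S` is complete: each basis state has a transition for each input. -/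
def BasisComplete (T : Mealy Q I O) (S : Set Q) : Prop :=
  ∀ q ∈ S, ∀ i : I, (T.trans q i).isSome

/-- A Mealy machine `H` with state set `S` contains the basis `S` of `T`:
`δ^H(q0^H, access(q)) = q` for every `q ∈ S`. -/
def ContainsBasis (T : Mealy Q I O) (S : Set Q) (H : Mealy ↥S I O) : Prop :=
  ∀ (q : ↥S) (σ : List I), T.delStar T.q0 σ = some (q : Q) → H.delStar H.q0 σ = some q

/-- `H` is a hypothesis for the observation tree `T` with basis `S`. -/
def IsHypothesis (T : Mealy Q I O) (S : Set Q) (H : Mealy ↥S I O) : Prop :=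
  H.Complete ∧ ContainsBasis T S H ∧
    ∀ (q : ↥S) (i : I) (o' : O) (p' : ↥S), H.trans q i = some (o', p') →
      ∀ (o : O) (p : Q), T.trans (q : Q) i = some (o, p) → o = o' ∧ ¬ T.Apart p (p' : Q)

/-- The equivalence `≈` on the states of a single machine, as a setoid. -/
def equivSetoid (M : Mealy Q I O) : Setoid Q :=
  ⟨fun q r => M.StateEquiv M q r,
   ⟨fun _ _ => rfl, fun h σ => (h σ).symm, fun h1 h2 σ => (h1 σ).trans (h2 σ)⟩⟩

/-- `R` is a bisimulation between `M` and `N`. -/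
def IsBisimulation (M : Mealy Q I O) (N : Mealy Q' I O) (R : Q → Q' → Prop) : Prop :=
  R M.q0 N.q0 ∧
    ∀ q r, R q r → ∀ i o q', M.trans q i = some (o, q') →
      ∃ r', N.trans r i = some (o, r') ∧ R q' r'


/-- `inp(U)`: inputs enabled in some state of `U`. -/
noncomputable def inpSet [Fintype I] (M : Mealy Q I O) (U : Set Q) : Finset I :=
  Finset.univ.filter fun i => ∃ q ∈ U, (M.trans q i).isSome

/-- `U →^i`: the states of `U` where input `i` is enabled. -/
def arrowSet (M : Mealy Q I O) (U : Set Q) (i : I) : Set Q :=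
  {q ∈ U | (M.trans q i).isSome}

/-- `U →^{i/o}`: the `i/o`-successors of states in `U`. -/
def stepSet (M : Mealy Q I O) (U : Set Q) (i : I) (o : O) : Set Q :=
  {q' | ∃ q ∈ U, M.trans q i = some (o, q')}

/-- The inner expression of the expected-reward recurrence for input `i`, where
`E'` plays the role of the recursive call. -/
noncomputable def rewardAux [Fintype O] (M : Mealy Q I O) (E' : Set Q → ℚ)
    (U : Set Q) (i : I) : ℚ :=
  ∑ o : O,
    ((M.stepSet U i o).ncard : ℚ) *
        (((M.arrowSet U i).ncard : ℚ) - ((M.stepSet U i o).ncard : ℚ)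
          + E' (M.stepSet U i o))
      / ((M.arrowSet U i).ncard : ℚ)

/-- Fueled version of the expected reward `E(U)`; the maximum over the empty
set is `0`. -/
noncomputable def Efuel [Fintype I] [Fintype O] (M : Mealy Q I O) :
    ℕ → Set Q → ℚ
  | 0, _ => 0
  | n + 1, U => WithBot.unbotD 0 ((M.inpSet U).image (M.rewardAux (M.Efuel n) U)).max

/-- The expected reward `E(U)`.  Since in a tree Mealy machine with finite state
space every chain `U, U→^{i/o}, …` reaches a set with no enabled inputs within
`Fintype.card Q` steps, fuel `Fintype.card Q + 1` realizes the recursive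
definition `E(U) = max_{i ∈ inp(U)} Σ_o |U→^{i/o}|·(|U→^i| − |U→^{i/o}| + E(U→^{i/o}))/|U→^i|`. -/
noncomputable def expectedReward [Fintype Q] [Fintype I] [Fintype O]
    (M : Mealy Q I O) (U : Set Q) : ℚ :=
  M.Efuel (Fintype.card Q + 1) U

/-- The value of the expression inside the maximum defining `E(U)`, for a given
input `i`; an input `i ∈ inp(U)` attains the maximum in the definition of
`E(U)` iff `rewardFor M U i = expectedReward M U`. -/
noncomputable def rewardFor [Fintype Q] [Fintype I] [Fintype O]
    (M : Mealy Q I O) (U : Set Q) (i : I) : ℚ :=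
  M.rewardAux (M.Efuel (Fintype.card Q)) U i

end Mealy

namespace Mealy

variable {Q I O : Type}

theorem stepStar_append (M : Mealy Q I O) (σ τ : List I) (q : Q) :
    M.stepStar q (σ ++ τ) = (M.stepStar q σ).bind
      (fun p => (M.stepStar p.2 τ).map fun s => (p.1 ++ s.1, s.2)) := by
  induction σ generalizing q with
  | nil =>
      simp [stepStar]
  | cons i σ ih =>
      cases h : M.trans q i with
      | none => simp [stepStar, h]
      | some p =>
          simp only [List.cons_append, stepStar, h, Option.bind_some, List.append_eq]
          rw [ih]
          cases hs : M.stepStar p.2 σ with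
          | none => rfl
          | some s =>
              simp only [Option.map_some, Option.bind_some]
              cases M.stepStar s.2 τ <;> simp

theorem delStar_append (M : Mealy Q I O) (σ τ : List I) (q : Q) :
    M.delStar q (σ ++ τ) = (M.delStar q σ).bind fun p => M.delStar p τ := by
  simp only [delStar, stepStar_append]
  cases M.stepStar q σ with
  | none => rfl
  | some p =>
      simp only [Option.map_some, Option.bind_some]
      cases M.stepStar p.2 τ <;> simp

theorem ncard_stepSet_le_aux [Fintype Q] (M : Mealy Q I O) (U B : Set Q) (i : I) (o : O)
    (hB : ∀ q ∈ U, ∀ q', M.trans q i = some (o, q') → q ∈ B) :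
    (M.stepSet U i o).ncard ≤ B.ncard := by
  classical
  set g : Q → Q := fun q => ((M.trans q i).map Prod.snd).getD q with hg
  have hsub : M.stepSet U i o ⊆ g '' B := by
    rintro q' ⟨q, hq, hq'⟩
    exact ⟨q, hB q hq q' hq', by simp [hg, hq']⟩
  calc (M.stepSet U i o).ncard ≤ (g '' B).ncard :=
        Set.ncard_le_ncard hsub (Set.toFinite _)
    _ ≤ B.ncard := Set.ncard_image_le (Set.toFinite _)

theorem ncard_stepSet_le [Fintype Q] (M : Mealy Q I O) (U : Set Q) (i : I) (o : O) :
    (M.stepSet U i o).ncard ≤ (M.arrowSet U i).ncard := by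
  refine ncard_stepSet_le_aux M U _ i o ?_
  intro q hq q' hq'
  exact ⟨hq, by simp [hq']⟩

theorem rewardAux_nonneg [Fintype Q] [Fintype O] (M : Mealy Q I O) (E' : Set Q → ℚ)
    (hE' : ∀ V, 0 ≤ E' V) (U : Set Q) (i : I) :
    0 ≤ M.rewardAux E' U i := by
  refine Finset.sum_nonneg fun o _ => ?_
  have h1 : ((M.stepSet U i o).ncard : ℚ) ≤ ((M.arrowSet U i).ncard : ℚ) := by
    exact_mod_cast M.ncard_stepSet_le U i o
  have h2 := hE' (M.stepSet U i o)
  apply div_nonneg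
  · apply mul_nonneg (by positivity)
    linarith
  · positivity

theorem Efuel_nonneg [Fintype Q] [Fintype I] [Fintype O] (M : Mealy Q I O) :
    ∀ n (U : Set Q), 0 ≤ M.Efuel n U := by
  intro n
  induction n with
  | zero => intro U; simp [Efuel]
  | succ n ih =>
      intro U
      rw [Efuel]
      cases hmax : ((M.inpSet U).image (M.rewardAux (M.Efuel n) U)).max with
      | bot => simp
      | coe x =>
          have hx := Finset.mem_of_max hmax
          obtain ⟨j, _, rfl⟩ := Finset.mem_image.mp hx
          simpa using M.rewardAux_nonneg _ ih U j

theorem le_Efuel_succ [Fintype Q] [Fintype I] [Fintype O] (M : Mealy Q I O)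
    (U : Set Q) (n : ℕ) (i : I) (hi : i ∈ M.inpSet U) :
    M.rewardAux (M.Efuel n) U i ≤ M.Efuel (n + 1) U := by
  rw [Efuel]
  set s := (M.inpSet U).image (M.rewardAux (M.Efuel n) U) with hs
  have hmem : M.rewardAux (M.Efuel n) U i ∈ s := Finset.mem_image_of_mem _ hi
  have hne : s.Nonempty := ⟨_, hmem⟩
  have h1 : WithBot.unbotD 0 s.max = s.max' hne := by
    rw [← Finset.coe_max' hne]; rfl
  rw [h1]
  exact Finset.le_max' s _ hmem

theorem Efuel_pos [Fintype Q] [Fintype I] [Fintype O] (M : Mealy Q I O) :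
    ∀ (n : ℕ) (σ : List I) (U : Set Q) (r r' : Q), σ.length ≤ n → r ∈ U → r' ∈ U →
      M.ApartW σ r r' → 0 < M.Efuel n U := by
  intro n
  induction n with
  | zero =>
      rintro σ U r r' hlen hr hr' ⟨h1, h2, h3⟩
      have : σ = [] := List.length_eq_zero_iff.mp (Nat.le_zero.mp hlen)
      subst this
      simp [outStar, stepStar] at h3
  | succ n ih =>
      rintro σ U r r' hlen hr hr' ⟨h1, h2, h3⟩
      cases σ with
      | nil => simp [outStar, stepStar] at h3
      | cons i σ' =>
          -- unpack the first step from r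
          obtain ⟨⟨o, p⟩, hop⟩ : ∃ x, M.trans r i = some x := by
            cases h : M.trans r i with
            | none => simp [outStar, stepStar, h] at h1
            | some x => exact ⟨x, rfl⟩
          obtain ⟨⟨w, z⟩, hw⟩ : ∃ x, M.stepStar p σ' = some x := by
            cases h : M.stepStar p σ' with
            | none => simp [outStar, stepStar, hop, h] at h1
            | some x => exact ⟨x, rfl⟩
          obtain ⟨⟨o', p'⟩, hop'⟩ : ∃ x, M.trans r' i = some x := by
            cases h : M.trans r' i with
            | none => simp [outStar, stepStar, h] at h2
            | some x => exact ⟨x, rfl⟩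
          obtain ⟨⟨w', z'⟩, hw'⟩ : ∃ x, M.stepStar p' σ' = some x := by
            cases h : M.stepStar p' σ' with
            | none => simp [outStar, stepStar, hop', h] at h2
            | some x => exact ⟨x, rfl⟩
          have hout : M.outStar r (i :: σ') = some (o :: w) := by
            rw [outStar, stepStar, hop]; simp [hw]
          have hout' : M.outStar r' (i :: σ') = some (o' :: w') := by
            rw [outStar, stepStar, hop']; simp [hw']
          have hne : o :: w ≠ o' :: w' := by
            intro hcontra
            exact h3 (by rw [hout, hout', hcontra])
          have hi : i ∈ M.inpSet U := by
            simp only [inpSet, Finset.mem_filter, Finset.mem_univ, true_and]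
            exact ⟨r, hr, by simp [hop]⟩
          have hrA : r ∈ M.arrowSet U i := ⟨hr, by simp [hop]⟩
          have hr'A : r' ∈ M.arrowSet U i := ⟨hr', by simp [hop']⟩
          have haposN : 0 < (M.arrowSet U i).ncard :=
            (Set.ncard_pos (Set.toFinite _)).mpr ⟨r, hrA⟩
          have hapos : 0 < ((M.arrowSet U i).ncard : ℚ) := by exact_mod_cast haposN
          have hpV : p ∈ M.stepSet U i o := ⟨r, hr, hop⟩
          have hvposN : 0 < (M.stepSet U i o).ncard :=
            (Set.ncard_pos (Set.toFinite _)).mpr ⟨p, hpV⟩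
          have hvpos : 0 < ((M.stepSet U i o).ncard : ℚ) := by exact_mod_cast hvposN
          have hvle : ((M.stepSet U i o).ncard : ℚ) ≤ ((M.arrowSet U i).ncard : ℚ) := by
            exact_mod_cast M.ncard_stepSet_le U i o
          -- the term for output o is positive
          have hterm : 0 < ((M.stepSet U i o).ncard : ℚ) *
              (((M.arrowSet U i).ncard : ℚ) - ((M.stepSet U i o).ncard : ℚ)
                + M.Efuel n (M.stepSet U i o)) / ((M.arrowSet U i).ncard : ℚ) := by
            by_cases hoo : o = o'
            · -- same first output: recurse
              subst hoo
              have hwne : w ≠ w' := fun hcontra => hne (by rw [hcontra])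
              have hp'V : p' ∈ M.stepSet U i o := ⟨r', hr', hop'⟩
              have hap2 : M.ApartW σ' p p' := by
                refine ⟨?_, ?_, ?_⟩
                · simp [outStar, hw]
                · simp [outStar, hw']
                · simp only [outStar, hw, hw', Option.map_some]
                  exact fun hcontra => hwne (by injection hcontra)
              have hE := ih σ' (M.stepSet U i o) p p'
                (Nat.le_of_succ_le_succ hlen) hpV hp'V hap2
              apply div_pos _ hapos
              apply mul_pos hvpos
              linarith
            · -- different first output: V is a proper subset of the arrow set
              have hvlt : ((M.stepSet U i o).ncard : ℚ) + 1 ≤ ((M.arrowSet U i).ncard : ℚ) := by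
                have hBsub : (M.stepSet U i o).ncard ≤
                    ({q ∈ M.arrowSet U i | ∃ q'', M.trans q i = some (o, q'')} : Set Q).ncard := by
                  refine ncard_stepSet_le_aux M U _ i o ?_
                  intro q hq q' hq'
                  exact ⟨⟨hq, by simp [hq']⟩, q', hq'⟩
                have hBlt : ({q ∈ M.arrowSet U i | ∃ q'', M.trans q i = some (o, q'')} : Set Q).ncard
                    < (M.arrowSet U i).ncard := by
                  apply Set.ncard_lt_ncard _ (Set.toFinite _)
                  constructor
                  · rintro q ⟨hq, _⟩; exact hq
                  · intro hsub
                    obtain ⟨-, q'', hq''⟩ := hsub hr'A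
                    rw [hop'] at hq''
                    simp only [Option.some.injEq, Prod.mk.injEq] at hq''
                    exact hoo hq''.1.symm
                have : (M.stepSet U i o).ncard + 1 ≤ (M.arrowSet U i).ncard :=
                  Nat.succ_le_of_lt (lt_of_le_of_lt hBsub hBlt)
                exact_mod_cast this
              have hE := M.Efuel_nonneg n (M.stepSet U i o)
              apply div_pos _ hapos
              apply mul_pos hvpos
              linarith
          -- hence the reward for input i is positive
          have hrw : 0 < M.rewardAux (M.Efuel n) U i := by
            refine Finset.sum_pos' (fun o'' _ => ?_) ⟨o, Finset.mem_univ o, hterm⟩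
            have h1' : ((M.stepSet U i o'').ncard : ℚ) ≤ ((M.arrowSet U i).ncard : ℚ) := by
              exact_mod_cast M.ncard_stepSet_le U i o''
            have h2' := M.Efuel_nonneg n (M.stepSet U i o'')
            apply div_nonneg
            · apply mul_nonneg (by positivity); linarith
            · positivity
          exact lt_of_lt_of_le hrw (M.le_Efuel_succ U n i hi)

theorem isSome_stepStar_prefix (M : Mealy Q I O) (r : Q) (σ : List I) (k : ℕ)
    (h : (M.stepStar r σ).isSome) : (M.stepStar r (σ.take k)).isSome := by
  have := M.stepStar_append (σ.take k) (σ.drop k) r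
  rw [List.take_append_drop] at this
  rw [this] at h
  cases hs : M.stepStar r (σ.take k) with
  | none => rw [hs] at h; simp at h
  | some _ => simp

/-- In a tree Mealy machine, any input word defined from some state is shorter
than the number of states. -/
theorem length_lt_card [Fintype Q] (T : Mealy Q I O) (htree : T.IsTree)
    (r : Q) (σ : List I) (h : (T.stepStar r σ).isSome) :
    σ.length < Fintype.card Q := by
  classical
  obtain ⟨α, hα, -⟩ := htree r
  have hpre : ∀ k : ℕ, (T.delStar r (σ.take k)).isSome := by
    intro k
    rw [delStar, Option.isSome_map]
    exact T.isSome_stepStar_prefix r σ k h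
  set f : Fin (σ.length + 1) → Q := fun k => (T.delStar r (σ.take k)).get (hpre k) with hf
  have haccess : ∀ k : Fin (σ.length + 1),
      T.delStar T.q0 (α ++ σ.take k) = some (f k) := by
    intro k
    rw [delStar_append, hα, Option.bind_some, hf]
    exact (Option.some_get (hpre k)).symm
  have hinj : Function.Injective f := by
    intro j k hjk
    obtain ⟨β, hβ, huniq⟩ := htree (f j)
    have e1 : α ++ σ.take j = β := huniq _ (haccess j)
    have e2 : α ++ σ.take k = β := huniq _ (by rw [hjk]; exact haccess k)
    have elen : (α ++ σ.take (j : ℕ)).length = (α ++ σ.take (k : ℕ)).length := by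
      rw [e1, e2]
    simp only [List.length_append, List.length_take] at elen
    have hj : min (j : ℕ) σ.length = (j : ℕ) :=
      Nat.min_eq_left (Nat.le_of_lt_succ j.isLt)
    have hk : min (k : ℕ) σ.length = (k : ℕ) :=
      Nat.min_eq_left (Nat.le_of_lt_succ k.isLt)
    rw [hj, hk] at elen
    exact Fin.ext (by omega)
  have := Fintype.card_le_of_injective f hinj
  simpa using this

end Mealy

/-- In a tree Mealy machine `T` (with finite `O`), if a set of
states `U` contains two apart states `r # r'`, then the expected reward
satisfies `E(U) > 0`. -/
theorem statement_15 {Q I O : Type} [Fintype Q] [Fintype I] [Fintype O]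
    (T : Mealy Q I O) (htree : T.IsTree) (U : Set Q)
    (r r' : Q) (hr : r ∈ U) (hr' : r' ∈ U) (hap : T.Apart r r') :
    0 < T.expectedReward U := by
  obtain ⟨σ, hσ⟩ := hap
  have hsome : (T.stepStar r σ).isSome := by
    have := hσ.1
    rwa [Mealy.outStar, Option.isSome_map] at this
  have hlen : σ.length ≤ Fintype.card Q + 1 :=
    le_of_lt (lt_trans (T.length_lt_card htree r σ hsome) (Nat.lt_succ_self _))
  exact T.Efuel_pos (Fintype.card Q + 1) σ U r r' hlen hr hr' hσ
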